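/- Let T ≥ 4 be an integer, 0 < δ < 1/e, and b > 0. Let (Ω, 𝓕, P) be a probability space with a filtration (𝓕_s)_{s=0}^T, and let M_1, …, M_T be random variables such that M_s is 𝓕_s-measurable and 0 ≤ M_s ≤ b almost surely for each s. Then with probability at least 1 − 2δ log T, simultaneously for every 1 ≤ t ≤ T, Σ_{s=1}^t E[M_s | 𝓕_{s−1}] ≤ 2 Σ_{s=1}^t M_s + 128 b log(1/δ). -/

import Mathlib

open MeasureTheory Finset

lemma aux_exp_le (u : ℝ) (h0 : 0 ≤ u) (h1 : u ≤ 1) :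
    Real.exp (-u) ≤ 1 + (Real.exp (-1) - 1) * u := by
  have h := convexOn_exp.2 (Set.mem_univ (0:ℝ)) (Set.mem_univ (-1:ℝ))
      (by linarith : (0:ℝ) ≤ 1 - u) h0 (by ring)
  simp only [smul_eq_mul, mul_zero, zero_add, mul_neg, mul_one, Real.exp_zero] at h
  calc Real.exp (-u) = Real.exp (-(u * 1)) := by ring_nf
    _ ≤ (1 - u) * 1 + u * Real.exp (-1) := by
        rw [mul_one, mul_one]; exact h
    _ = 1 + (Real.exp (-1) - 1) * u := by ring

lemma aux_one_add_le (u : ℝ) (h0 : 0 ≤ u) :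
    1 + (Real.exp (-1) - 1) * u ≤ Real.exp (-(u/2)) := by
  have h2 : -(u/2) + 1 ≤ Real.exp (-(u/2)) := Real.add_one_le_exp _
  have h4 : Real.exp (-1) * Real.exp 1 = 1 := by rw [← Real.exp_add]; simp
  have h5 : (2:ℝ) ≤ Real.exp 1 := by
    have := Real.exp_one_gt_d9; linarith
  have h3 : Real.exp (-1) ≤ 1/2 := by nlinarith [Real.exp_pos (-1)]
  nlinarith

/-- Uniform-in-time multiplicative Freedman corollary: the running sums of conditional
means of adapted, nonnegative, bounded variables are at most twice the realized running
sums plus `128 b log(1/δ)`, with probability at least `1 - 2 δ log T`. -/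
theorem freedman_multiplicative_uniform
    {Ω : Type*} {m0 : MeasurableSpace Ω} (μ : Measure Ω) [IsProbabilityMeasure μ]
    (T : ℕ) (hT : 4 ≤ T) (δ : ℝ) (hδ0 : 0 < δ) (hδ1 : δ < 1 / Real.exp 1)
    (b : ℝ) (hb : 0 < b)
    (ℱ : Filtration ℕ m0)
    (M : ℕ → Ω → ℝ)
    (hmeas : ∀ s, 1 ≤ s → s ≤ T → Measurable[ℱ s] (M s))
    (hbdd : ∀ s, 1 ≤ s → s ≤ T → ∀ᵐ ω ∂μ, 0 ≤ M s ω ∧ M s ω ≤ b) :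
    ENNReal.ofReal (1 - 2 * δ * Real.log T) ≤
      μ {ω | ∀ t, 1 ≤ t → t ≤ T →
        ∑ s ∈ Finset.Icc 1 t, (μ[M s | ℱ (s - 1)]) ω ≤
          2 * ∑ s ∈ Finset.Icc 1 t, M s ω + 128 * b * Real.log (1 / δ)} := by
  have hb2 : (0:ℝ) < 2 * b := by linarith
  set L : ℝ := Real.log (1 / δ) with hLdef
  set g : ℕ → Ω → ℝ := fun s => μ[M s | ℱ (s - 1)] with hgdef
  set W : ℕ → Ω → ℝ :=
    fun t ω => Real.exp (∑ s ∈ Finset.Icc 1 (min t T), (g s ω / (2 * b) - M s ω / b))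
    with hWdef
  -- basic measurability / integrability
  have hgmeas : ∀ s, StronglyMeasurable[ℱ (s - 1)] (g s) := fun s => stronglyMeasurable_condExp
  have hM0 : ∀ s, 1 ≤ s → s ≤ T → Measurable (M s) := fun s h1 h2 => (hmeas s h1 h2).le (ℱ.le s)
  have hMint : ∀ s, 1 ≤ s → s ≤ T → Integrable (M s) μ := by
    intro s h1 h2
    refine Integrable.mono' (integrable_const b) (hM0 s h1 h2).aestronglyMeasurable ?_
    filter_upwards [hbdd s h1 h2] with ω h
    rw [Real.norm_eq_abs, abs_le]
    constructor <;> linarith [h.1, h.2]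
  have hgbdd : ∀ s, 1 ≤ s → s ≤ T → ∀ᵐ ω ∂μ, 0 ≤ g s ω ∧ g s ω ≤ b := by
    intro s h1 h2
    have h0 : (0:Ω → ℝ) ≤ᵐ[μ] g s := condExp_nonneg ((hbdd s h1 h2).mono fun ω h => h.1)
    have hub : g s ≤ᵐ[μ] μ[(fun _ => b) | ℱ (s - 1)] :=
      condExp_mono (hMint s h1 h2) (integrable_const b) ((hbdd s h1 h2).mono fun ω h => h.2)
    have hc : μ[(fun _ : Ω => b) | ℱ (s - 1)] = fun _ => b := condExp_const (ℱ.le _) b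
    filter_upwards [h0, hub] with ω hω hω'
    refine ⟨hω, ?_⟩
    rw [hc] at hω'
    exact hω'
  have hae : ∀ᵐ ω ∂μ, ∀ s, 1 ≤ s → s ≤ T →
      (0 ≤ M s ω ∧ M s ω ≤ b) ∧ (0 ≤ g s ω ∧ g s ω ≤ b) := by
    rw [ae_all_iff]
    intro s
    by_cases h : 1 ≤ s ∧ s ≤ T
    · filter_upwards [hbdd s h.1 h.2, hgbdd s h.1 h.2] with ω hM hg _ _
      exact ⟨hM, hg⟩
    · exact ae_of_all _ fun ω h1 h2 => absurd ⟨h1, h2⟩ h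
  have hWpos : ∀ t ω, 0 < W t ω := fun t ω => Real.exp_pos _
  have hWadp : StronglyAdapted ℱ W := by
    intro t
    apply Measurable.stronglyMeasurable
    apply Measurable.exp
    apply Finset.measurable_sum
    intro s hs
    simp only [Finset.mem_Icc] at hs
    have hst : s ≤ t := le_trans hs.2 (min_le_left _ _)
    have hsT : s ≤ T := le_trans hs.2 (min_le_right _ _)
    have h1 : Measurable[ℱ t] (g s) :=
      ((hgmeas s).mono (ℱ.mono (by omega : s - 1 ≤ t))).measurable
    have h2 : Measurable[ℱ t] (M s) := (hmeas s hs.1 hsT).le (ℱ.mono hst)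
    exact (h1.div_const _).sub (h2.div_const _)
  have hWbdd : ∀ t, ∀ᵐ ω ∂μ, ‖W t ω‖ ≤ Real.exp T := by
    intro t
    filter_upwards [hae] with ω hω
    rw [Real.norm_eq_abs, abs_of_pos (hWpos t ω), Real.exp_le_exp]
    have hle : ∀ s ∈ Finset.Icc 1 (min t T), g s ω / (2 * b) - M s ω / b ≤ 1/2 := by
      intro s hs
      simp only [Finset.mem_Icc] at hs
      obtain ⟨hM, hg⟩ := hω s hs.1 (le_trans hs.2 (min_le_right _ _))
      have h1 : g s ω / (2 * b) ≤ 1/2 := by rw [div_le_iff₀ hb2]; linarith [hg.2]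
      have h2 : 0 ≤ M s ω / b := div_nonneg hM.1 hb.le
      linarith
    have hcard : ((Finset.Icc 1 (min t T)).card : ℝ) ≤ T := by
      have : (Finset.Icc 1 (min t T)).card ≤ T := by rw [Nat.card_Icc]; omega
      exact_mod_cast this
    calc ∑ s ∈ Finset.Icc 1 (min t T), (g s ω / (2 * b) - M s ω / b)
        ≤ ∑ _s ∈ Finset.Icc 1 (min t T), (1/2 : ℝ) := Finset.sum_le_sum hle
      _ = ((Finset.Icc 1 (min t T)).card : ℝ) * (1/2) := by
          rw [Finset.sum_const, nsmul_eq_mul]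
      _ ≤ T := by nlinarith [Nat.cast_nonneg (α := ℝ) (Finset.Icc 1 (min t T)).card]
  have hWint : ∀ t, Integrable (W t) μ := fun t =>
    Integrable.mono' (integrable_const _)
      ((hWadp t).mono (ℱ.le t)).aestronglyMeasurable (hWbdd t)
  -- the supermartingale step
  have hstep : ∀ i, μ[W (i+1) | ℱ i] ≤ᵐ[μ] W i := by
    intro i
    by_cases hiT : T ≤ i
    · have hWe : W (i+1) = W i := by
        funext ω
        have h1 : min (i+1) T = T := min_eq_right (by omega)
        have h2 : min i T = T := min_eq_right hiT
        rw [hWdef]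
        simp only [h1, h2]
      rw [hWe, condExp_of_stronglyMeasurable (ℱ.le i) (hWadp i) (hWint i)]
    · push_neg at hiT
      have h1T : 1 ≤ i + 1 := by omega
      have hsT : i + 1 ≤ T := hiT
      set A : Ω → ℝ := fun ω => W i ω * Real.exp (g (i+1) ω / (2 * b)) with hAdef
      set Y : Ω → ℝ := fun ω => Real.exp (-(M (i+1) ω / b)) with hYdef
      have hWsplit : W (i+1) = fun ω => A ω * Y ω := by
        funext ω
        rw [hWdef, hAdef, hYdef, hWdef]
        simp only [min_eq_left hsT, min_eq_left (le_of_lt hiT)]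
        rw [Finset.sum_Icc_succ_top (by omega : 1 ≤ i + 1)]
        rw [sub_eq_add_neg (g (i+1) ω / (2*b)), ← add_assoc, Real.exp_add, Real.exp_add]
      have hAmeas : StronglyMeasurable[ℱ i] A := by
        apply Measurable.stronglyMeasurable
        exact (hWadp i).measurable.mul
          (Measurable.exp ((hgmeas (i+1)).measurable.div_const _))
      have hYmeas : Measurable Y := Measurable.exp ((hM0 (i+1) h1T hsT).div_const b).neg
      have hYint : Integrable Y μ := by
        refine Integrable.mono' (integrable_const 1) hYmeas.aestronglyMeasurable ?_
        filter_upwards [hbdd (i+1) h1T hsT] with ω h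
        rw [Real.norm_eq_abs, abs_of_pos (Real.exp_pos _), Real.exp_le_one_iff]
        simp only [neg_nonpos]
        exact div_nonneg h.1 hb.le
      have hAYint : Integrable (A * Y) μ := by
        have : A * Y = W (i+1) := by funext ω; rw [hWsplit]; rfl
        rw [this]; exact hWint (i+1)
      have hpull : μ[A * Y | ℱ i] =ᵐ[μ] A * μ[Y | ℱ i] :=
        condExp_mul_of_stronglyMeasurable_left hAmeas hAYint hYint
      set c : ℝ := (Real.exp (-1) - 1) / b with hcdef
      have hZeq : μ[(fun _ : Ω => (1:ℝ)) + c • M (i+1) | ℱ i]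
          =ᵐ[μ] fun ω => 1 + c * g (i+1) ω := by
        refine (condExp_add (integrable_const 1) ((hMint (i+1) h1T hsT).smul c) _).trans ?_
        have h3 := condExp_smul (μ := μ) (m := ℱ i) c (M (i+1))
        have h4 : μ[(fun _ : Ω => (1:ℝ)) | ℱ i] = fun _ => 1 := condExp_const (ℱ.le i) 1
        filter_upwards [h3] with ω hω
        have : (μ[M (i+1) | ℱ i]) ω = g (i+1) ω := rfl
        simp only [Pi.add_apply, h4, hω, Pi.smul_apply, smul_eq_mul, this]
      have hptwise : Y ≤ᵐ[μ] (fun _ : Ω => (1:ℝ)) + c • M (i+1) := by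
        filter_upwards [hbdd (i+1) h1T hsT] with ω h
        have hu0 : 0 ≤ M (i+1) ω / b := div_nonneg h.1 hb.le
        have hu1 : M (i+1) ω / b ≤ 1 := by rw [div_le_one hb]; exact h.2
        have haux := aux_exp_le (M (i+1) ω / b) hu0 hu1
        simp only [hYdef, Pi.add_apply, Pi.smul_apply, smul_eq_mul, hcdef]
        calc Real.exp (-(M (i+1) ω / b)) ≤ 1 + (Real.exp (-1) - 1) * (M (i+1) ω / b) := haux
          _ = 1 + (Real.exp (-1) - 1) / b * M (i+1) ω := by ring
      have hcond1 : μ[Y | ℱ i] ≤ᵐ[μ] fun ω => 1 + c * g (i+1) ω :=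
        (condExp_mono hYint
          ((integrable_const 1).add ((hMint (i+1) h1T hsT).smul c)) hptwise).trans hZeq.le
      have hfinal : A * μ[Y | ℱ i] ≤ᵐ[μ] W i := by
        filter_upwards [hcond1, hae] with ω h1 h2
        obtain ⟨_, hg0, hgb⟩ := h2 (i+1) h1T hsT
        have key : (μ[Y | ℱ i]) ω ≤ Real.exp (-(g (i+1) ω / (2 * b))) := by
          refine le_trans h1 ?_
          have heq : c * g (i+1) ω = (Real.exp (-1) - 1) * (g (i+1) ω / b) := by
            rw [hcdef]; ring
          have heq2 : -(g (i+1) ω / b / 2) = -(g (i+1) ω / (2 * b)) := by ring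
          rw [heq, ← heq2]
          exact aux_one_add_le (g (i+1) ω / b) (div_nonneg hg0 hb.le)
        have hApos : 0 ≤ A ω := le_of_lt (mul_pos (hWpos i ω) (Real.exp_pos _))
        calc (A * μ[Y | ℱ i]) ω = A ω * (μ[Y | ℱ i]) ω := rfl
          _ ≤ A ω * Real.exp (-(g (i+1) ω / (2 * b))) := mul_le_mul_of_nonneg_left key hApos
          _ = W i ω := by
              rw [hAdef]
              simp only
              rw [mul_assoc, ← Real.exp_add, add_neg_cancel, Real.exp_zero, mul_one]
      have : μ[W (i+1) | ℱ i] = μ[A * Y | ℱ i] := by rw [hWsplit]; rfl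
      rw [this]
      exact hpull.le.trans hfinal
  have hsuper : Supermartingale W ℱ μ := supermartingale_nat hWadp hWint hstep
  -- the stopping time argument
  set ε : ℝ := Real.exp (64 * L) with hεdef
  have hεpos : 0 < ε := Real.exp_pos _
  have hδ' : (0:ℝ) < 1 / δ := by positivity
  have hεδ : ε = (1/δ) ^ (64:ℕ) := by
    have hpow : ((1:ℝ)/δ) ^ (64:ℕ) = Real.exp (Real.log (1/δ)) ^ (64:ℕ) := by
      rw [Real.exp_log hδ']
    rw [hpow, ← Real.exp_nat_mul, hεdef, hLdef]
    norm_num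
  set τ : Ω → WithTop ℕ := fun ω => (hittingBtwn W (Set.Ici ε) 0 T ω : ℕ) with hτdef
  have hτstop : IsStoppingTime ℱ τ := hWadp.adapted.isStoppingTime_hittingBtwn measurableSet_Ici
  have hτle : ∀ ω, τ ω ≤ T := fun ω => WithTop.coe_le_coe.2 (hittingBtwn_le ω)
  have hSVint : Integrable (stoppedValue W τ) μ := integrable_stoppedValue ℕ hτstop hWint hτle
  have hW0 : W 0 = fun _ => 1 := by
    funext ω
    rw [hWdef]
    simp
  have hstopped : ∫ ω, stoppedValue W τ ω ∂μ ≤ 1 := by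
    have h := hsuper.neg.expected_stoppedValue_mono (isStoppingTime_const ℱ 0) hτstop
      (fun ω => WithTop.coe_le_coe.2 (Nat.zero_le _)) hτle
    have h1 : stoppedValue (-W) (fun _ => ((0:ℕ) : WithTop ℕ)) = fun ω => -(W 0 ω) := rfl
    have h2 : stoppedValue (-W) τ = fun ω => -(stoppedValue W τ ω) := rfl
    change ∫ x, stoppedValue (-W) (fun _ => ((0:ℕ) : WithTop ℕ)) x ∂μ ≤ _ at h
    rw [h1, h2, integral_neg, integral_neg, neg_le_neg_iff] at h
    calc ∫ ω, stoppedValue W τ ω ∂μ ≤ ∫ ω, W 0 ω ∂μ := h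
      _ = 1 := by rw [hW0]; simp
  set cst : ℝ := 128 * b * L with hcstdef
  set Bad : Set Ω := {ω | ∃ t, 1 ≤ t ∧ t ≤ T ∧
    2 * ∑ s ∈ Finset.Icc 1 t, M s ω + cst < ∑ s ∈ Finset.Icc 1 t, g s ω} with hBaddef
  have hBadmeas : MeasurableSet Bad := by
    have : Bad = ⋃ t ∈ Set.Icc 1 T, {ω | 2 * ∑ s ∈ Finset.Icc 1 t, M s ω + cst
        < ∑ s ∈ Finset.Icc 1 t, g s ω} := by
      ext ω
      simp only [hBaddef, Set.mem_setOf_eq, Set.mem_iUnion, Set.mem_Icc, exists_prop]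
      constructor
      · rintro ⟨t, h1, h2, h3⟩; exact ⟨t, ⟨h1, h2⟩, h3⟩
      · rintro ⟨t, ⟨h1, h2⟩, h3⟩; exact ⟨t, h1, h2, h3⟩
    rw [this]
    refine MeasurableSet.biUnion (Set.to_countable _) fun t ht => ?_
    refine measurableSet_lt ?_ ?_
    · refine Measurable.add_const (Measurable.const_mul ?_ 2) cst
      refine Finset.measurable_sum _ fun s hs => ?_
      simp only [Finset.mem_Icc] at hs
      exact hM0 s hs.1 (le_trans hs.2 ht.2)
    · exact Finset.measurable_sum _ fun s hs => (hgmeas s).measurable.le (ℱ.le _)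
  have hBadsub : ∀ ω ∈ Bad, ε ≤ stoppedValue W τ ω := by
    intro ω hω
    obtain ⟨t, ht1, htT, hlt⟩ := hω
    have hWt : ε ≤ W t ω := by
      rw [hWdef]
      simp only [min_eq_left htT]
      rw [hεdef, Real.exp_le_exp]
      have hsum : ∑ s ∈ Finset.Icc 1 t, (g s ω / (2 * b) - M s ω / b)
          = ((∑ s ∈ Finset.Icc 1 t, g s ω) - 2 * (∑ s ∈ Finset.Icc 1 t, M s ω)) / (2 * b) := by
        rw [Finset.sum_sub_distrib, ← Finset.sum_div, ← Finset.sum_div]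
        field_simp
      rw [hsum, le_div_iff₀ hb2]
      rw [hcstdef] at hlt
      nlinarith
    have hmem : stoppedValue W τ ω ∈ Set.Ici ε :=
      stoppedValue_hittingBtwn_mem ⟨t, ⟨Nat.zero_le t, htT⟩, hWt⟩
    exact hmem
  have hμBad : ε * (μ Bad).toReal ≤ 1 := by
    have h1 := setIntegral_ge_of_const_le hBadmeas (measure_ne_top μ Bad) hBadsub
      hSVint.integrableOn
    rw [smul_eq_mul, measureReal_def] at h1
    have h2 : ∫ ω in Bad, stoppedValue W τ ω ∂μ ≤ ∫ ω, stoppedValue W τ ω ∂μ :=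
      setIntegral_le_integral hSVint (ae_of_all _ fun ω => (hWpos _ ω).le)
    linarith
  have hlogT : 1 ≤ Real.log T := by
    rw [Real.le_log_iff_exp_le (by positivity : (0:ℝ) < (T:ℝ))]
    have h9 := Real.exp_one_lt_d9
    have h4 : (4:ℝ) ≤ (T:ℝ) := by exact_mod_cast hT
    linarith
  have hBadle : μ Bad ≤ ENNReal.ofReal (2 * δ * Real.log T) := by
    have hδle1 : δ ≤ 1 := by
      have : 1/Real.exp 1 < 1 := by
        rw [div_lt_one (Real.exp_pos 1)]
        have := Real.exp_one_gt_d9; linarith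
      linarith
    have htoReal : (μ Bad).toReal ≤ δ ^ (64:ℕ) := by
      have h1 : (μ Bad).toReal ≤ 1/ε := by
        rw [le_div_iff₀ hεpos]
        linarith [hμBad]
      have h2 : 1/ε = δ ^ (64:ℕ) := by
        rw [hεδ, one_div, div_pow, one_pow, one_div, inv_inv]
      linarith [h1, h2.le, h2.ge]
    have hp : δ ^ (64:ℕ) ≤ δ := by
      calc δ ^ (64:ℕ) ≤ δ ^ (1:ℕ) := pow_le_pow_of_le_one hδ0.le hδle1 (by norm_num)
        _ = δ := pow_one δ
    have hfin : δ ^ (64:ℕ) ≤ 2 * δ * Real.log T := by nlinarith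
    calc μ Bad = ENNReal.ofReal (μ Bad).toReal := (ENNReal.ofReal_toReal (measure_ne_top μ Bad)).symm
      _ ≤ ENNReal.ofReal (2 * δ * Real.log T) :=
          ENNReal.ofReal_le_ofReal (le_trans htoReal hfin)
  have hGoal : {ω | ∀ t, 1 ≤ t → t ≤ T →
      ∑ s ∈ Finset.Icc 1 t, (μ[M s | ℱ (s - 1)]) ω ≤
        2 * ∑ s ∈ Finset.Icc 1 t, M s ω + 128 * b * Real.log (1 / δ)} = Badᶜ := by
    ext ω
    simp only [hBaddef, hcstdef, hLdef, Set.mem_compl_iff, Set.mem_setOf_eq, not_exists,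
      not_and, not_lt]
    exact Iff.rfl
  rw [hGoal, prob_compl_eq_one_sub hBadmeas]
  have h2δ : 0 ≤ 2 * δ * Real.log T := by nlinarith
  have h1 : ENNReal.ofReal (1 - 2 * δ * Real.log T)
      = 1 - ENNReal.ofReal (2 * δ * Real.log T) := by
    rw [ENNReal.ofReal_sub _ h2δ, ENNReal.ofReal_one]
  rw [h1]
  exact tsub_le_tsub_left hBadle 1
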